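/- Let f : ℕ → ℚ be a sequence with f(i) ≠ 0 for all i ≥ 1. Let s ≥ 1 and let (k_1, …, k_s) be a tuple of positive natural numbers with k_1 + … + k_s = n, and suppose λ_1, …, λ_s ∈ ℚ satisfy f(n) = λ_1·f(k_1) + … + λ_s·f(k_s). Then the multi F-nomial coefficient satisfies the recurrence f!(n)/(f!(k_1)⋯f!(k_s)) = Σ_{j=1}^{s} λ_j · f!(n−1)/(f!(k_1)⋯f!(k_{j−1})·f!(k_j − 1)·f!(k_{j+1})⋯f!(k_s)). -/

import Mathlib

/-- The F-factorial of a rational-valued sequence: `ffact f n = ∏_{i=1}^{n} f i`. -/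
def ffact (f : ℕ → ℚ) (n : ℕ) : ℚ := ∏ i ∈ Finset.range n, f (i + 1)

/-- Recurrence for multi F-nomial coefficients: if `k₁ + ⋯ + k_s = n` is a composition into
`s ≥ 1` positive parts and `f n = λ₁·f k₁ + ⋯ + λ_s·f k_s`, then
`f!(n)/(f!(k₁)⋯f!(k_s)) = Σ_j λ_j · f!(n-1)/(f!(k₁)⋯f!(k_j - 1)⋯f!(k_s))`. -/
theorem multi_Fnomial_recurrence (f : ℕ → ℚ) (hf : ∀ i : ℕ, 1 ≤ i → f i ≠ 0)
    (n s : ℕ) (hs : 1 ≤ s) (k : Fin s → ℕ) (hk : ∀ j, 1 ≤ k j) (hsum : (∑ j, k j) = n)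
    (lam : Fin s → ℚ) (hlam : f n = ∑ j, lam j * f (k j)) :
    ffact f n / ∏ j, ffact f (k j) =
      ∑ j, lam j * (ffact f (n - 1) / ∏ i, ffact f (Function.update k j (k j - 1) i)) := by
  have hP : ∀ m, ffact f m ≠ 0 := by
    intro m
    refine Finset.prod_ne_zero_iff.mpr fun i _ => hf (i + 1) (Nat.succ_le_succ (Nat.zero_le i))
  have hffs : ∀ m, 1 ≤ m → ffact f m = f m * ffact f (m - 1) := by
    intro m hm
    obtain ⟨m, rfl⟩ := Nat.exists_eq_add_of_le hm
    simp [ffact, Finset.prod_range_succ, Nat.add_comm 1 m, mul_comm]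
  have hn : 1 ≤ n := by
    have h1 := hk ⟨0, hs⟩
    have h2 : k ⟨0, hs⟩ ≤ n :=
      hsum ▸ Finset.single_le_sum (f := k) (fun i _ => Nat.zero_le _) (Finset.mem_univ (⟨0, hs⟩ : Fin s))
    omega
  set P := ∏ j, ffact f (k j) with hPdef
  have step : ∀ j : Fin s,
      lam j * (ffact f (n - 1) / ∏ i, ffact f (Function.update k j (k j - 1) i)) =
      lam j * f (k j) * ffact f (n - 1) / P := by
    intro j
    have hup : (fun i => ffact f (Function.update k j (k j - 1) i)) =
        Function.update (fun i => ffact f (k i)) j (ffact f (k j - 1)) := by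
      funext i
      by_cases h : i = j
      · subst h; simp
      · simp [Function.update_of_ne h]
    have h1 : (∏ i, ffact f (Function.update k j (k j - 1) i)) =
        ffact f (k j - 1) * ∏ i ∈ Finset.univ.erase j, ffact f (k i) := by
      rw [hup, Finset.prod_update_of_mem (Finset.mem_univ j)]
      simp [Finset.sdiff_singleton_eq_erase]
    have h2 : P = f (k j) * (ffact f (k j - 1) * ∏ i ∈ Finset.univ.erase j, ffact f (k i)) := by
      rw [hPdef, ← Finset.prod_erase_mul _ _ (Finset.mem_univ j), hffs (k j) (hk j)]
      ring
    have hQ : (∏ i ∈ Finset.univ.erase j, ffact f (k i)) ≠ 0 :=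
      Finset.prod_ne_zero_iff.mpr fun i _ => hP _
    rw [h1, h2]
    have hfkj := hf (k j) (hk j)
    have hfk1 := hP (k j - 1)
    field_simp
  rw [Finset.sum_congr rfl fun j _ => step j, ← Finset.sum_div]
  have : (∑ j, lam j * f (k j) * ffact f (n - 1)) = f n * ffact f (n - 1) := by
    rw [hlam, Finset.sum_mul]
  rw [this, hffs n hn]
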